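/- Let 1 ≤ p < q < r ≤ ∞ and suppose (ψ_n) is a sequence of measurable functions on ℝ^d with ‖ψ_n‖_p ≤ A, ‖ψ_n‖_r ≤ A, and ‖ψ_n‖_q ≥ a > 0 for all n. Then there exist ε > 0 and δ > 0, depending only on p, q, r, a, A, such that |{x : |ψ_n(x)| > ε}| ≥ δ for all n. -/

import Mathlib

open MeasureTheory ENNReal

/-- The `pqr`-theorem: if a sequence of measurable functions on `ℝ^d` is uniformly bounded in
`L^p` and `L^r` and uniformly bounded below in an intermediate `L^q` norm, then the measures of
its superlevel sets are uniformly bounded below. -/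
theorem stmt14 {d : ℕ} (p q r : ℝ≥0∞) (hp : 1 ≤ p) (hpq : p < q) (hqr : q < r)
    (A a : ℝ≥0∞) (hA : A ≠ ⊤) (ha : 0 < a)
    (ψ : ℕ → EuclideanSpace ℝ (Fin d) → ℝ)
    (hmeas : ∀ n, AEStronglyMeasurable (ψ n) volume)
    (hp' : ∀ n, eLpNorm (ψ n) p volume ≤ A)
    (hr' : ∀ n, eLpNorm (ψ n) r volume ≤ A)
    (hq' : ∀ n, a ≤ eLpNorm (ψ n) q volume) :
    ∃ ε > (0 : ℝ), ∃ δ > (0 : ℝ≥0∞), ∀ n,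
      δ ≤ volume {x | ε < |ψ n x|} := by
  have hq_top : q ≠ ⊤ := (hqr.trans_le le_top).ne
  have hp_top : p ≠ ⊤ := (hpq.trans_le le_top).ne
  have hp0 : p ≠ 0 := (lt_of_lt_of_le zero_lt_one hp).ne'
  have hq0 : q ≠ 0 := (lt_of_lt_of_le (lt_of_lt_of_le zero_lt_one hp) hpq.le).ne'
  set P := p.toReal with hPdef
  set Q := q.toReal with hQdef
  have hP0 : 0 < P := ENNReal.toReal_pos hp0 hp_top
  have hPQ : P < Q := (ENNReal.toReal_lt_toReal hp_top hq_top).mpr hpq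
  have hQ0 : 0 < Q := hP0.trans hPQ
  set B := A + 1 with hBdef
  set b := min a 1 with hbdef
  have hB_top : B ≠ ⊤ := ENNReal.add_ne_top.mpr ⟨hA, ENNReal.one_ne_top⟩
  have hB0 : B ≠ 0 := by
    simp [hBdef]
  have hb0 : b ≠ 0 := (lt_min ha zero_lt_one).ne'
  have hb_top : b ≠ ⊤ := ((min_le_right a 1).trans_lt ENNReal.one_lt_top).ne
  have hbq : ∀ n, b ≤ eLpNorm (ψ n) q volume := fun n => (min_le_left a 1).trans (hq' n)
  have hpB : ∀ n, eLpNorm (ψ n) p volume ≤ B := fun n => (hp' n).trans le_self_add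
  have hrB : ∀ n, eLpNorm (ψ n) r volume ≤ B := fun n => (hr' n).trans le_self_add
  have key : ∀ (x : ℝ≥0∞) (t : ℝ), 0 < t → (x ^ (1/t)) ^ t = x := fun x t ht => by
    rw [← ENNReal.rpow_mul, one_div_mul_cancel ht.ne', ENNReal.rpow_one]
  have hBP_top : B ^ P ≠ ⊤ := ENNReal.rpow_ne_top_of_nonneg hP0.le hB_top
  have hBP0 : B ^ P ≠ 0 := (ENNReal.rpow_pos (pos_iff_ne_zero.mpr hB0) hB_top).ne'
  have hbQ0 : b ^ Q ≠ 0 := (ENNReal.rpow_pos (pos_iff_ne_zero.mpr hb0) hb_top).ne'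
  have hbQ_top : b ^ Q ≠ ⊤ := ENNReal.rpow_ne_top_of_nonneg hQ0.le hb_top
  set c : ℝ≥0∞ := (b ^ Q / 2) * (B ^ P)⁻¹ with hcdef
  have hc0 : c ≠ 0 := by
    refine mul_ne_zero ?_ (ENNReal.inv_ne_zero.mpr hBP_top)
    exact (ENNReal.div_pos hbQ0 ENNReal.ofNat_ne_top).ne'
  have hc_top : c ≠ ⊤ := by
    refine ENNReal.mul_ne_top ?_ (ENNReal.inv_ne_top.mpr hBP0)
    exact (ENNReal.div_lt_top hbQ_top (by norm_num)).ne
  set ε : ℝ := (c ^ (1/(Q-P))).toReal with hεdef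
  have hcε_top : c ^ (1/(Q-P)) ≠ ⊤ :=
    ENNReal.rpow_ne_top_of_nonneg (one_div_pos.mpr (by linarith)).le hc_top
  have hε0 : 0 < ε := ENNReal.toReal_pos
    (ENNReal.rpow_pos (pos_iff_ne_zero.mpr hc0) hc_top).ne' hcε_top
  have hE : ENNReal.ofReal ε = c ^ (1/(Q-P)) := ENNReal.ofReal_toReal hcε_top
  have hεc : (ENNReal.ofReal ε) ^ (Q - P) * B ^ P = b ^ Q / 2 := by
    rw [hE, key c (Q-P) (by linarith), hcdef, mul_assoc,
      ENNReal.inv_mul_cancel hBP0 hBP_top, mul_one]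
  -- main per-n estimate, with exponent θ on the measure
  have main : ∀ n, ∃ S : Set (EuclideanSpace ℝ (Fin d)), MeasurableSet S ∧
      volume {x | ε < |ψ n x|} = volume S ∧
      b ^ Q ≤ (∫⁻ x in S, (‖(hmeas n).mk (ψ n) x‖₊ : ℝ≥0∞) ^ Q) + b ^ Q / 2 := by
    intro n
    set g := (hmeas n).mk (ψ n) with hgdef
    have hgm : StronglyMeasurable g := (hmeas n).stronglyMeasurable_mk
    have hfg : ψ n =ᵐ[volume] g := (hmeas n).ae_eq_mk
    set F : EuclideanSpace ℝ (Fin d) → ℝ≥0∞ := fun x => (‖g x‖₊ : ℝ≥0∞) with hFdef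
    have hFm : Measurable F := hgm.measurable.nnnorm.coe_nnreal_ennreal
    set S := {x | ε < |g x|} with hSdef
    have hS : MeasurableSet S := measurableSet_lt measurable_const hgm.measurable.abs
    refine ⟨S, hS, ?_, ?_⟩
    · refine measure_congr ?_
      filter_upwards [hfg] with x hx
      show (ε < |ψ n x|) = (ε < |g x|)
      rw [hx]
    -- lower bound on ∫ F^Q
    have hIq : b ^ Q ≤ ∫⁻ x, F x ^ Q := by
      have h1 : b ≤ (∫⁻ x, F x ^ Q) ^ (1/Q) := by
        have := hbq n
        rwa [eLpNorm_congr_ae hfg, eLpNorm_eq_lintegral_rpow_enorm_toReal hq0 hq_top] at this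
      calc b ^ Q ≤ ((∫⁻ x, F x ^ Q) ^ (1/Q)) ^ Q := ENNReal.rpow_le_rpow h1 hQ0.le
        _ = _ := key _ _ hQ0
    -- upper bound on ∫ F^P
    have hIp : ∫⁻ x, F x ^ P ≤ B ^ P := by
      have h1 : (∫⁻ x, F x ^ P) ^ (1/P) ≤ B := by
        have := hpB n
        rwa [eLpNorm_congr_ae hfg, eLpNorm_eq_lintegral_rpow_enorm_toReal hp0 hp_top] at this
      calc ∫⁻ x, F x ^ P = ((∫⁻ x, F x ^ P) ^ (1/P)) ^ P := (key _ _ hP0).symm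
        _ ≤ B ^ P := ENNReal.rpow_le_rpow h1 hP0.le
    -- small part
    have hsmall : ∫⁻ x in Sᶜ, F x ^ Q ≤ b ^ Q / 2 := by
      have hbd : ∀ x ∈ Sᶜ, F x ^ Q ≤ (ENNReal.ofReal ε) ^ (Q - P) * F x ^ P := by
        intro x hx
        have hxε : |g x| ≤ ε := not_lt.mp hx
        have hF_le : F x ≤ ENNReal.ofReal ε := by
          rw [hFdef]
          simp only
          rw [← enorm_eq_nnnorm, ← ofReal_norm]
          exact ENNReal.ofReal_le_ofReal (by simpa using hxε)
        calc F x ^ Q = F x ^ (Q - P) * F x ^ P := by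
              rw [← ENNReal.rpow_add_of_nonneg (Q - P) P (by linarith : (0:ℝ) ≤ Q - P) hP0.le,
                sub_add_cancel]
          _ ≤ (ENNReal.ofReal ε) ^ (Q - P) * F x ^ P :=
              mul_le_mul_left (ENNReal.rpow_le_rpow hF_le (by linarith)) _
      calc ∫⁻ x in Sᶜ, F x ^ Q
          ≤ ∫⁻ x in Sᶜ, (ENNReal.ofReal ε) ^ (Q - P) * F x ^ P :=
            setLIntegral_mono (by fun_prop) hbd
        _ = (ENNReal.ofReal ε) ^ (Q - P) * ∫⁻ x in Sᶜ, F x ^ P :=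
            lintegral_const_mul _ (by fun_prop)
        _ ≤ (ENNReal.ofReal ε) ^ (Q - P) * ∫⁻ x, F x ^ P :=
            mul_le_mul_right (setLIntegral_le_lintegral _ _) _
        _ ≤ (ENNReal.ofReal ε) ^ (Q - P) * B ^ P := mul_le_mul_right hIp _
        _ = b ^ Q / 2 := hεc
    calc b ^ Q ≤ ∫⁻ x, F x ^ Q := hIq
      _ = (∫⁻ x in S, F x ^ Q) + ∫⁻ x in Sᶜ, F x ^ Q := (lintegral_add_compl _ hS).symm
      _ ≤ (∫⁻ x in S, F x ^ Q) + b ^ Q / 2 := add_le_add_right hsmall _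
  -- constants for the conclusion
  have hBQ_top : B ^ Q ≠ ⊤ := ENNReal.rpow_ne_top_of_nonneg hQ0.le hB_top
  have hBQ0 : B ^ Q ≠ 0 := (ENNReal.rpow_pos (pos_iff_ne_zero.mpr hB0) hB_top).ne'
  have hhalf_top : b ^ Q / 2 ≠ ⊤ := (ENNReal.div_lt_top hbQ_top (by norm_num)).ne
  have hhalf0 : b ^ Q / 2 ≠ 0 := (ENNReal.div_pos hbQ0 ENNReal.ofNat_ne_top).ne'
  set δ0 : ℝ≥0∞ := (b ^ Q / 2) * (B ^ Q)⁻¹ with hδ0def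
  have hδ00 : δ0 ≠ 0 := mul_ne_zero hhalf0 (ENNReal.inv_ne_zero.mpr hBQ_top)
  have hδ0top : δ0 ≠ ⊤ := ENNReal.mul_ne_top hhalf_top (ENNReal.inv_ne_top.mpr hBQ0)
  have combine : ∀ (X T : ℝ≥0∞), b ^ Q ≤ X + b ^ Q / 2 → X ≤ B ^ Q * T → δ0 ≤ T := by
    intro X T h1 h2
    have h3 : b ^ Q / 2 + b ^ Q / 2 ≤ B ^ Q * T + b ^ Q / 2 := by
      rw [ENNReal.add_halves]; exact h1.trans (add_le_add_left h2 _)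
    have h4 : b ^ Q / 2 ≤ B ^ Q * T := (ENNReal.add_le_add_iff_right hhalf_top).mp h3
    calc δ0 ≤ (B ^ Q * T) * (B ^ Q)⁻¹ := mul_le_mul_left h4 _
      _ = T := by rw [mul_comm (B ^ Q) T, mul_assoc, ENNReal.mul_inv_cancel hBQ0 hBQ_top, mul_one]
  rcases eq_or_ne r ⊤ with hr_top | hr_top
  · -- case r = ∞
    refine ⟨ε, hε0, δ0, pos_iff_ne_zero.mpr hδ00, fun n => ?_⟩
    obtain ⟨S, hS, hvol, hmain⟩ := main n
    set g := (hmeas n).mk (ψ n) with hgdef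
    have hae : ∀ᵐ x ∂(volume : Measure (EuclideanSpace ℝ (Fin d))), (‖g x‖₊ : ℝ≥0∞) ≤ B := by
      have h1 : eLpNormEssSup g volume ≤ B := by
        have := hrB n
        rwa [eLpNorm_congr_ae (hmeas n).ae_eq_mk, hr_top, eLpNorm_exponent_top] at this
      filter_upwards [enorm_ae_le_eLpNormEssSup g volume] with x hx using hx.trans h1
    have hbig : (∫⁻ x in S, (‖g x‖₊ : ℝ≥0∞) ^ Q) ≤ B ^ Q * volume S := by
      calc ∫⁻ x in S, (‖g x‖₊ : ℝ≥0∞) ^ Q ≤ ∫⁻ _x in S, B ^ Q := by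
            refine lintegral_mono_ae ?_
            filter_upwards [ae_restrict_of_ae hae] with x hx using
              ENNReal.rpow_le_rpow hx hQ0.le
        _ = B ^ Q * volume S := by rw [setLIntegral_const]
    rw [hvol]
    exact combine _ _ hmain hbig
  · -- case r < ∞
    have hr0 : r ≠ 0 := (lt_trans (lt_of_lt_of_le (lt_of_lt_of_le zero_lt_one hp) hpq.le) hqr).ne'
    set R := r.toReal with hRdef
    have hQR : Q < R := (ENNReal.toReal_lt_toReal hq_top hr_top).mpr hqr
    have hR0 : 0 < R := hQ0.trans hQR
    set u : ℝ := R / Q with hudef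
    set v : ℝ := R / (R - Q) with hvdef
    have hv0 : 0 < v := div_pos hR0 (by linarith)
    have hconj : u.HolderConjugate v := by
      rw [Real.holderConjugate_iff]
      constructor
      · exact (one_lt_div hQ0).mpr hQR
      · rw [hudef, hvdef, inv_div, inv_div, ← add_div]
        field_simp
        ring
    refine ⟨ε, hε0, δ0 ^ v, ENNReal.rpow_pos (pos_iff_ne_zero.mpr hδ00) hδ0top, fun n => ?_⟩
    obtain ⟨S, hS, hvol, hmain⟩ := main n
    set g := (hmeas n).mk (ψ n) with hgdef
    have hgm : StronglyMeasurable g := (hmeas n).stronglyMeasurable_mk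
    set F : EuclideanSpace ℝ (Fin d) → ℝ≥0∞ := fun x => (‖g x‖₊ : ℝ≥0∞) with hFdef
    have hFm : Measurable F := hgm.measurable.nnnorm.coe_nnreal_ennreal
    have hIr : ∫⁻ x, F x ^ R ≤ B ^ R := by
      have h1 : (∫⁻ x, F x ^ R) ^ (1/R) ≤ B := by
        have := hrB n
        rwa [eLpNorm_congr_ae (hmeas n).ae_eq_mk, eLpNorm_eq_lintegral_rpow_enorm_toReal hr0 hr_top]
          at this
      calc ∫⁻ x, F x ^ R = ((∫⁻ x, F x ^ R) ^ (1/R)) ^ R := (key _ _ hR0).symm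
        _ ≤ B ^ R := ENNReal.rpow_le_rpow h1 hR0.le
    have hH := ENNReal.lintegral_mul_le_Lp_mul_Lq volume hconj
      (f := fun x => F x ^ Q) (g := S.indicator fun _ => (1 : ℝ≥0∞))
      ((hFm.pow_const Q).aemeasurable) ((measurable_const.indicator hS).aemeasurable)
    have hL : (∫⁻ x, ((fun x => F x ^ Q) * S.indicator fun _ => (1 : ℝ≥0∞)) x)
        = ∫⁻ x in S, F x ^ Q := by
      rw [← lintegral_indicator hS]
      refine lintegral_congr fun x => ?_
      by_cases hx : x ∈ S <;> simp [Set.indicator_apply, hx]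
    have hR1 : (∫⁻ x, (F x ^ Q) ^ u) ^ (1/u) ≤ B ^ Q := by
      have e1 : ∀ x, (F x ^ Q) ^ u = F x ^ R := fun x => by
        rw [← ENNReal.rpow_mul, mul_comm, div_mul_cancel₀ _ hQ0.ne']
      have e2 : (1:ℝ)/u = Q / R := by rw [hudef, one_div_div]
      calc (∫⁻ x, (F x ^ Q) ^ u) ^ (1/u) = (∫⁻ x, F x ^ R) ^ (Q/R) := by
            rw [e2]; congr 1; exact lintegral_congr fun x => e1 x
        _ ≤ (B ^ R) ^ (Q/R) := ENNReal.rpow_le_rpow hIr (by positivity)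
        _ = B ^ Q := by rw [← ENNReal.rpow_mul, mul_comm, div_mul_cancel₀ _ hR0.ne']
    have hR2 : (∫⁻ x, (S.indicator (fun _ => (1:ℝ≥0∞)) x) ^ v) ^ (1/v)
        = (volume S) ^ (1/v) := by
      congr 1
      rw [← setLIntegral_one S, ← lintegral_indicator hS]
      refine lintegral_congr fun x => ?_
      by_cases hx : x ∈ S <;>
        simp [Set.indicator_apply, hx, ENNReal.zero_rpow_of_pos hv0]
    have hbig : (∫⁻ x in S, F x ^ Q) ≤ B ^ Q * (volume S) ^ (1/v) := by
      rw [← hL]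
      exact hH.trans (mul_le_mul hR1 hR2.le zero_le zero_le)
    have hδ1 : δ0 ≤ (volume S) ^ (1/v) := combine _ _ hmain hbig
    rw [hvol]
    calc δ0 ^ v ≤ ((volume S) ^ (1/v)) ^ v := ENNReal.rpow_le_rpow hδ1 hv0.le
      _ = volume S := key _ _ hv0
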